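/- Fix a real number α > −1/2, a purely imaginary β, and an integer n ≥ 1. For t ∈ [0, π) define the inner product ⟨f, g⟩_t := (1/(2π))∫_t^{2π−t} f(e^{iθ}) · conj(g(e^{iθ})) · |e^{iθ}−1|^{2α} e^{iβ(θ−π)} dθ on polynomials, and for 0 ≤ k ≤ n let φ_k(·; t) be the monic polynomial of degree k with ⟨φ_k, z^j⟩_t = 0 for all 0 ≤ j < k (these monic orthogonal polynomials exist and are unique since the weight is positive on the arc), and set χ_k(t)^{−2} := ⟨φ_k, φ_k⟩_t > 0. Then the function t ↦ D_n(t) is differentiable on (0, π) and, with θ₁ = t, θ₂ = 2π − t and z_j = e^{iθ_j}: d/dt log D_n(t) = −(1/(2π)) · Σ_{j=1}^{2} |e^{iθ_j}−1|^{2α} e^{iβ(θ_j−π)} · Σ_{k=0}^{n−1} χ_k(t)² · |φ_k(z_j; t)|². -/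

import Mathlib

/-- The Fisher–Hartwig weight `|e^{iθ}−1|^{2α} e^{iβ(θ−π)}`. -/
noncomputable def fhWeight (α : ℝ) (β : ℂ) (θ : ℝ) : ℂ :=
  ((‖Complex.exp (Complex.I * θ) - 1‖) ^ (2 * α) : ℝ) *
    Complex.exp (Complex.I * β * ((θ : ℂ) - (Real.pi : ℂ)))

/-- The Toeplitz determinant `D_n(t)`: the determinant of the `n×n` matrix whose
`(j,k)` entry is `(1/2π)∫_t^{2π−t} |e^{iθ}−1|^{2α} e^{iβ(θ−π)} e^{−i(j−k)θ} dθ`. -/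
noncomputable def toeplitzD (α : ℝ) (β : ℂ) (n : ℕ) (t : ℝ) : ℂ :=
  Matrix.det (Matrix.of fun j k : Fin n =>
    (1 / (2 * (Real.pi : ℂ))) *
      ∫ θ in t..(2 * Real.pi - t),
        fhWeight α β θ * Complex.exp (-Complex.I * ((j.1 : ℂ) - (k.1 : ℂ)) * θ))

/-- The inner product `⟨f, g⟩_t = (1/2π)∫_t^{2π−t} f(e^{iθ}) conj(g(e^{iθ}))
|e^{iθ}−1|^{2α} e^{iβ(θ−π)} dθ` on polynomials. -/
noncomputable def fhInner (α : ℝ) (β : ℂ) (t : ℝ) (f g : Polynomial ℂ) : ℂ :=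
  (1 / (2 * (Real.pi : ℂ))) *
    ∫ θ in t..(2 * Real.pi - t),
      f.eval (Complex.exp (Complex.I * θ))
        * (starRingEnd ℂ) (g.eval (Complex.exp (Complex.I * θ)))
        * fhWeight α β θ

open MeasureTheory intervalIntegral Set Polynomial Finset Complex Matrix

section Helpers

open MeasureTheory intervalIntegral Complex Polynomial Matrix Finset
open scoped Real


lemma exp_ne_one {θ : ℝ} (h1 : 0 < θ) (h2 : θ < 2 * Real.pi) :
    Complex.exp (Complex.I * θ) ≠ 1 := by
  intro h
  rw [Complex.exp_eq_one_iff] at h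
  obtain ⟨k, hk⟩ := h
  have hθ : (θ : ℂ) = (k : ℂ) * (2 * Real.pi) := by
    have := hk
    have h' : Complex.I * θ = Complex.I * ((k : ℂ) * (2 * Real.pi)) := by
      rw [hk]; ring
    exact mul_left_cancel₀ Complex.I_ne_zero h'
  have hθ' : θ = (k : ℝ) * (2 * Real.pi) := by
    exact_mod_cast hθ
  have hπ := Real.pi_pos
  rcases le_or_gt (k : ℝ) 0 with hk0 | hk0
  · nlinarith
  · have : (1 : ℝ) ≤ (k : ℝ) := by exact_mod_cast (by exact_mod_cast hk0 : (0:ℤ) < k)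
    nlinarith

lemma fhWeight_continuousAt (α : ℝ) (β : ℂ) {θ : ℝ} (h1 : 0 < θ) (h2 : θ < 2 * Real.pi) :
    ContinuousAt (fhWeight α β) θ := by
  have habs : ContinuousAt (fun x : ℝ => ‖Complex.exp (Complex.I * x) - 1‖) θ := by
    exact continuous_norm.continuousAt.comp (by fun_prop)
  have hne : ‖Complex.exp (Complex.I * θ) - 1‖ ≠ 0 := by
    simpa [sub_eq_zero] using exp_ne_one h1 h2
  have h3 : ContinuousAt (fun x : ℝ =>
      ((‖Complex.exp (Complex.I * x) - 1‖) ^ (2 * α) : ℝ)) θ :=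
    habs.rpow_const (Or.inl hne)
  have h4 : ContinuousAt (fun x : ℝ =>
      (((‖Complex.exp (Complex.I * x) - 1‖) ^ (2 * α) : ℝ) : ℂ)) θ :=
    Complex.continuous_ofReal.continuousAt.comp h3
  apply h4.mul
  fun_prop

lemma fhWeight_conj (α : ℝ) {β : ℂ} (hβ : β.re = 0) (θ : ℝ) :
    (starRingEnd ℂ) (fhWeight α β θ) = fhWeight α β θ := by
  have hb : (starRingEnd ℂ) β = -β := by
    apply Complex.ext <;> simp [hβ]
  unfold fhWeight
  rw [RingHom.map_mul, Complex.conj_ofReal, ← Complex.exp_conj]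
  congr 2
  rw [RingHom.map_mul, RingHom.map_mul, hb, Complex.conj_I,
    RingHom.map_sub, Complex.conj_ofReal, Complex.conj_ofReal]
  ring
open Matrix Finset

lemma det_hasDerivAt {n : ℕ} (A : ℝ → Matrix (Fin n) (Fin n) ℂ)
    (B : Matrix (Fin n) (Fin n) ℂ) (t : ℝ)
    (h : ∀ p q, HasDerivAt (fun x => A x p q) (B p q) t) :
    HasDerivAt (fun x => (A x).det)
      (∑ i : Fin n, ((A t).updateCol i (fun k => B k i)).det) t := by
  have hdet : ∀ x, (A x).det =
      ∑ σ : Equiv.Perm (Fin n), ((Equiv.Perm.sign σ : ℤ) : ℂ) * ∏ i, A x (σ i) i := by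
    intro x
    rw [Matrix.det_apply]
    refine Finset.sum_congr rfl fun σ _ => ?_
    rw [Units.smul_def, zsmul_eq_mul]
  have hD : HasDerivAt (fun x => (A x).det)
      (∑ σ : Equiv.Perm (Fin n), ((Equiv.Perm.sign σ : ℤ) : ℂ) *
        ∑ i : Fin n, (∏ j ∈ Finset.univ.erase i, A t (σ j) j) * B (σ i) i) t := by
    simp only [hdet]
    apply HasDerivAt.fun_sum
    intro σ _
    have hp : HasDerivAt (fun x => ∏ i, A x (σ i) i)
        (∑ i : Fin n, (∏ j ∈ Finset.univ.erase i, A t (σ j) j) * B (σ i) i) t := by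
      have := HasDerivAt.fun_finsetProd (u := Finset.univ)
        (f := fun i x => A x (σ i) i) (f' := fun i => B (σ i) i)
        (fun i _ => h (σ i) i)
      simpa [smul_eq_mul] using this
    simpa using hp.const_mul (((Equiv.Perm.sign σ : ℤ) : ℂ))
  convert hD using 1
  simp_rw [Finset.mul_sum]
  rw [Finset.sum_comm]
  refine Finset.sum_congr rfl fun i _ => ?_
  rw [Matrix.det_apply]
  refine Finset.sum_congr rfl fun σ _ => ?_
  rw [Units.smul_def, zsmul_eq_mul]
  have hsplit : (∏ j : Fin n, ((A t).updateCol i fun k => B k i) (σ j) j)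
      = B (σ i) i * ∏ j ∈ Finset.univ.erase i, A t (σ j) j := by
    rw [← Finset.mul_prod_erase Finset.univ _ (Finset.mem_univ i)]
    congr 1
    · simp [Matrix.updateCol_apply]
    · refine Finset.prod_congr rfl fun j hj => ?_
      rw [Matrix.updateCol_apply, if_neg (Finset.mem_erase.mp hj).1]
  rw [hsplit]
  ring
open MeasureTheory intervalIntegral Set

lemma entry_hasDerivAt (E : ℝ → ℂ)
    (hE : ContinuousOn E (Set.Ioo 0 (2 * Real.pi)))
    {t : ℝ} (ht : t ∈ Set.Ioo (0 : ℝ) Real.pi) :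
    HasDerivAt (fun x : ℝ => (1 / (2 * (Real.pi : ℂ))) * ∫ θ in x..(2 * Real.pi - x), E θ)
      (-(1 / (2 * (Real.pi : ℂ))) * (E t + E (2 * Real.pi - t))) t := by
  obtain ⟨ht0, htπ⟩ := ht
  have hπ := Real.pi_pos
  have hπmem : Real.pi ∈ Set.Ioo (0:ℝ) (2 * Real.pi) := ⟨hπ, by linarith⟩
  have hopen : IsOpen (Set.Ioo (0:ℝ) (2 * Real.pi)) := isOpen_Ioo
  have hsub : ∀ {y : ℝ}, y ∈ Set.Ioo (0:ℝ) (2 * Real.pi) →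
      IntervalIntegrable E volume Real.pi y := fun hy =>
    (hE.mono ((Set.ordConnected_Ioo).uIcc_subset hπmem hy)).intervalIntegrable
  set F : ℝ → ℂ := fun y => ∫ θ in Real.pi..y, E θ with hF
  have hFd : ∀ y ∈ Set.Ioo (0:ℝ) (2 * Real.pi), HasDerivAt F (E y) y := fun y hy =>
    integral_hasDerivAt_right (hsub hy)
      (ContinuousOn.stronglyMeasurableAtFilter hopen hE y hy)
      (hE.continuousAt (hopen.mem_nhds hy))
  have htmem : t ∈ Set.Ioo (0:ℝ) (2 * Real.pi) := ⟨ht0, by linarith⟩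
  have htmem' : 2 * Real.pi - t ∈ Set.Ioo (0:ℝ) (2 * Real.pi) := ⟨by linarith, by linarith⟩
  -- derivative of x ↦ F (2π − x)
  have h1 : HasDerivAt (fun x : ℝ => F (2 * Real.pi - x)) ((-1 : ℝ) • E (2 * Real.pi - t)) t := by
    have hg : HasDerivAt (fun x : ℝ => 2 * Real.pi - x) (-1) t := by
      simpa using (hasDerivAt_id t).const_sub (2 * Real.pi)
    exact (hFd _ htmem').scomp t hg
  have h2 : HasDerivAt (fun x : ℝ => F (2 * Real.pi - x) - F x)
      ((-1 : ℝ) • E (2 * Real.pi - t) - E t) t := h1.sub (hFd t htmem)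
  have h3 := h2.const_mul (1 / (2 * (Real.pi : ℂ)))
  have heq : (fun x : ℝ => (1 / (2 * (Real.pi : ℂ))) * ∫ θ in x..(2 * Real.pi - x), E θ)
      =ᶠ[nhds t] (fun x : ℝ => (1 / (2 * (Real.pi : ℂ))) * (F (2 * Real.pi - x) - F x)) := by
    filter_upwards [hopen.mem_nhds htmem] with x hx
    have hx' : 2 * Real.pi - x ∈ Set.Ioo (0:ℝ) (2 * Real.pi) := ⟨by linarith [hx.2], by linarith [hx.1]⟩
    have hsplit : (∫ θ in x..Real.pi, E θ) + (∫ θ in Real.pi..(2 * Real.pi - x), E θ)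
        = ∫ θ in x..(2 * Real.pi - x), E θ :=
      integral_add_adjacent_intervals (hsub hx).symm (hsub hx')
    have : (∫ θ in x..(2 * Real.pi - x), E θ) = F (2 * Real.pi - x) - F x := by
      rw [← hsplit, integral_symm]
      show -F x + F (2 * Real.pi - x) = _
      ring
    rw [this]
  have hfinal := HasDerivAt.congr_of_eventuallyEq h3 heq
  convert hfinal using 1
  rfl
  simp only [neg_smul, one_smul]
  ring
open MeasureTheory intervalIntegral Set Polynomial Finset Complex





lemma intervalIntegral_conj {f : ℝ → ℂ} {a b : ℝ} :
    (∫ x in a..b, (starRingEnd ℂ) (f x)) = (starRingEnd ℂ) (∫ x in a..b, f x) := by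
  simp only [intervalIntegral_eq_integral_uIoc, ← integral_conj, Complex.real_smul, _root_.map_mul,
    Complex.conj_ofReal]

lemma fhInner_conj_symm (α : ℝ) {β : ℂ} (hβ : β.re = 0) (t : ℝ) (f g : Polynomial ℂ) :
    fhInner α β t g f = (starRingEnd ℂ) (fhInner α β t f g) := by
  unfold fhInner
  rw [RingHom.map_mul]
  congr 1
  · have : ((2 : ℂ) * (Real.pi : ℂ)) = ((2 * Real.pi : ℝ) : ℂ) := by push_cast; ring
    rw [this, ← Complex.ofReal_one]
    rw [show (((1:ℝ)) : ℂ) / (((2 * Real.pi : ℝ)) : ℂ) = (((1 / (2 * Real.pi) : ℝ)) : ℂ) by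
      push_cast; ring]
    rw [Complex.conj_ofReal]
  · rw [← intervalIntegral_conj]
    apply intervalIntegral.integral_congr
    intro θ _
    simp only [_root_.map_mul, Complex.conj_conj, fhWeight_conj α hβ]
    ring

lemma uIcc_sub (t : ℝ) (ht : t ∈ Set.Ioo (0:ℝ) Real.pi) :
    Set.uIcc t (2 * Real.pi - t) ⊆ Set.Ioo (0:ℝ) (2 * Real.pi) := by
  have hπ := Real.pi_pos
  obtain ⟨h0, h1⟩ := ht
  rw [Set.uIcc_of_le (by linarith)]
  intro x hx
  exact ⟨by linarith [hx.1], by linarith [hx.2]⟩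

lemma fhWeight_continuousOn (α : ℝ) (β : ℂ) {t : ℝ} (ht : t ∈ Set.Ioo (0:ℝ) Real.pi) :
    ContinuousOn (fhWeight α β) (Set.uIcc t (2 * Real.pi - t)) := fun x hx =>
  ((fhWeight_continuousAt α β (uIcc_sub t ht hx).1 (uIcc_sub t ht hx).2).continuousWithinAt)

lemma fhInner_expand (α : ℝ) (β : ℂ) {t : ℝ} (ht : t ∈ Set.Ioo (0:ℝ) Real.pi)
    {n : ℕ} (f g : Polynomial ℂ) (hf : f.natDegree < n) (hg : g.natDegree < n) :
    fhInner α β t f g = ∑ p ∈ (Finset.range n) ×ˢ (Finset.range n),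
      f.coeff p.1 * (starRingEnd ℂ) (g.coeff p.2) * fhInner α β t (X ^ p.1) (X ^ p.2) := by
  have hW := fhWeight_continuousOn α β ht
  have hterm : ∀ p : ℕ × ℕ, ContinuousOn (fun θ : ℝ =>
      (X ^ p.1 : Polynomial ℂ).eval (Complex.exp (Complex.I * θ))
        * (starRingEnd ℂ) ((X ^ p.2 : Polynomial ℂ).eval (Complex.exp (Complex.I * θ)))
        * fhWeight α β θ) (Set.uIcc t (2 * Real.pi - t)) := by
    intro p
    apply ContinuousOn.mul _ hW
    apply ContinuousOn.mul
    · apply Continuous.continuousOn; fun_prop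
    · apply Continuous.continuousOn
      apply Complex.continuous_conj.comp; fun_prop
  have hpt : ∀ θ : ℝ,
      f.eval (Complex.exp (Complex.I * θ))
        * (starRingEnd ℂ) (g.eval (Complex.exp (Complex.I * θ)))
        * fhWeight α β θ
      = ∑ p ∈ (Finset.range n) ×ˢ (Finset.range n),
          f.coeff p.1 * (starRingEnd ℂ) (g.coeff p.2) *
            ((X ^ p.1 : Polynomial ℂ).eval (Complex.exp (Complex.I * θ))
              * (starRingEnd ℂ) ((X ^ p.2 : Polynomial ℂ).eval (Complex.exp (Complex.I * θ)))
              * fhWeight α β θ) := by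
    intro θ
    rw [eval_eq_sum_range' hf, eval_eq_sum_range' hg, map_sum, Finset.sum_mul_sum,
      Finset.sum_mul, Finset.sum_product]
    simp only [Finset.sum_mul]
    refine Finset.sum_congr rfl fun j _ => Finset.sum_congr rfl fun l _ => ?_
    simp only [_root_.map_mul, map_pow, eval_pow, eval_X]
    ring
  unfold fhInner
  rw [intervalIntegral.integral_congr (fun θ _ => hpt θ),
    intervalIntegral.integral_finset_sum (fun p _ =>
      ((continuousOn_const.fun_mul (hterm p)).intervalIntegrable)),
    Finset.mul_sum]
  refine Finset.sum_congr rfl fun p _ => ?_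
  rw [intervalIntegral.integral_const_mul]
  ring

lemma fhInner_expand_left (α : ℝ) (β : ℂ) {t : ℝ} (ht : t ∈ Set.Ioo (0:ℝ) Real.pi)
    {n : ℕ} (f g : Polynomial ℂ) (hf : f.natDegree < n) :
    fhInner α β t f g = ∑ a ∈ Finset.range n, f.coeff a * fhInner α β t (X ^ a) g := by
  have hW := fhWeight_continuousOn α β ht
  have hterm : ∀ a : ℕ, ContinuousOn (fun θ : ℝ =>
      (X ^ a : Polynomial ℂ).eval (Complex.exp (Complex.I * θ))
        * (starRingEnd ℂ) (g.eval (Complex.exp (Complex.I * θ)))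
        * fhWeight α β θ) (Set.uIcc t (2 * Real.pi - t)) := by
    intro a
    apply ContinuousOn.mul _ hW
    apply Continuous.continuousOn
    apply Continuous.mul
    · fun_prop
    · exact Complex.continuous_conj.comp (g.continuous.comp (by fun_prop))
  have hpt : ∀ θ : ℝ,
      f.eval (Complex.exp (Complex.I * θ))
        * (starRingEnd ℂ) (g.eval (Complex.exp (Complex.I * θ)))
        * fhWeight α β θ
      = ∑ a ∈ Finset.range n, f.coeff a *
          ((X ^ a : Polynomial ℂ).eval (Complex.exp (Complex.I * θ))
            * (starRingEnd ℂ) (g.eval (Complex.exp (Complex.I * θ)))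
            * fhWeight α β θ) := by
    intro θ
    rw [eval_eq_sum_range' hf, Finset.sum_mul, Finset.sum_mul]
    refine Finset.sum_congr rfl fun a _ => ?_
    simp only [eval_pow, eval_X]
    ring
  unfold fhInner
  rw [intervalIntegral.integral_congr (fun θ _ => hpt θ),
    intervalIntegral.integral_finset_sum (fun a _ =>
      ((continuousOn_const.fun_mul (hterm a)).intervalIntegrable)),
    Finset.mul_sum]
  refine Finset.sum_congr rfl fun a _ => ?_
  rw [intervalIntegral.integral_const_mul]
  ring

lemma integrand_entry (α : ℝ) (β : ℂ) (j k : ℕ) (θ : ℝ) :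
    fhWeight α β θ * Complex.exp (-Complex.I * ((j:ℂ) - (k:ℂ)) * θ)
      = (X ^ k : Polynomial ℂ).eval (Complex.exp (Complex.I * θ))
        * (starRingEnd ℂ) ((X ^ j : Polynomial ℂ).eval (Complex.exp (Complex.I * θ)))
        * fhWeight α β θ := by
  simp only [eval_pow, eval_X, ← Complex.exp_nat_mul, ← Complex.exp_conj, _root_.map_mul, map_natCast,
    Complex.conj_I, Complex.conj_ofReal]
  rw [← Complex.exp_add]
  rw [show (↑k * (Complex.I * (θ:ℂ)) + ↑j * (-Complex.I * ↑θ))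
      = -Complex.I * ((j:ℂ) - (k:ℂ)) * θ by ring]
  ring

lemma fhInner_expand_right (α : ℝ) {β : ℂ} (hβ : β.re = 0) {t : ℝ}
    (ht : t ∈ Set.Ioo (0:ℝ) Real.pi) {n : ℕ} (f g : Polynomial ℂ) (hg : g.natDegree < n) :
    fhInner α β t f g = ∑ b ∈ Finset.range n,
      (starRingEnd ℂ) (g.coeff b) * fhInner α β t f (X ^ b) := by
  rw [show fhInner α β t f g = (starRingEnd ℂ) (fhInner α β t g f) from
      fhInner_conj_symm α hβ t g f,
    fhInner_expand_left α β ht g f hg, map_sum]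
  refine Finset.sum_congr rfl fun b _ => ?_
  rw [RingHom.map_mul, ← fhInner_conj_symm α hβ t (X ^ b) f]

end Helpers

/-- Differential identity for the Toeplitz determinant: if `φ_k(·;t)`
(`0 ≤ k ≤ n`) are the monic orthogonal polynomials for the Fisher–Hartwig
weight on the arc `(t, 2π−t)` and `χ_k(t)^{−2} = ⟨φ_k, φ_k⟩_t`, then on
`(0, π)` the Toeplitz determinant `D_n` is differentiable and satisfies
`d/dt log D_n(t) = −(1/2π) Σ_{j=1}^2 w(θ_j) Σ_{k=0}^{n−1} χ_k(t)²|φ_k(z_j;t)|²`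
with `θ₁ = t`, `θ₂ = 2π − t`, `z_j = e^{iθ_j}` (stated equivalently as
`D_n′(t) = D_n(t) ⋅ RHS`). -/
theorem toeplitz_logderiv_identity
    (α : ℝ) (hα : -1/2 < α) (β : ℂ) (hβ : β.re = 0) (n : ℕ) (hn : 1 ≤ n)
    (φ : ℕ → ℝ → Polynomial ℂ) (χ : ℕ → ℝ → ℝ)
    (hmonic : ∀ k ≤ n, ∀ t ∈ Set.Ico (0 : ℝ) Real.pi, (φ k t).Monic)
    (hdeg : ∀ k ≤ n, ∀ t ∈ Set.Ico (0 : ℝ) Real.pi, (φ k t).natDegree = k)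
    (horth : ∀ k ≤ n, ∀ t ∈ Set.Ico (0 : ℝ) Real.pi, ∀ j < k,
      fhInner α β t (φ k t) (Polynomial.X ^ j) = 0)
    (hχpos : ∀ k ≤ n, ∀ t ∈ Set.Ico (0 : ℝ) Real.pi, 0 < χ k t)
    (hχ : ∀ k ≤ n, ∀ t ∈ Set.Ico (0 : ℝ) Real.pi,
      fhInner α β t (φ k t) (φ k t) = (((χ k t)⁻¹ ^ 2 : ℝ) : ℂ)) :
    ∀ t ∈ Set.Ioo (0 : ℝ) Real.pi,
      HasDerivAt (fun x : ℝ => toeplitzD α β n x)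
        (toeplitzD α β n t *
          (-(1 / (2 * (Real.pi : ℂ))) *
            (fhWeight α β t *
                ∑ k ∈ Finset.range n, (((χ k t) ^ 2 : ℝ) : ℂ) *
                  ((Complex.normSq ((φ k t).eval (Complex.exp (Complex.I * t))) : ℝ) : ℂ)
              + fhWeight α β (2 * Real.pi - t) *
                ∑ k ∈ Finset.range n, (((χ k t) ^ 2 : ℝ) : ℂ) *
                  ((Complex.normSq ((φ k t).eval
                      (Complex.exp (Complex.I * (2 * Real.pi - t)))) : ℝ) : ℂ))))
        t := by
  intro t ht
  obtain ⟨ht0, ht1⟩ := ht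
  have htIoo : t ∈ Set.Ioo (0:ℝ) Real.pi := ⟨ht0, ht1⟩
  have htIco : t ∈ Set.Ico (0:ℝ) Real.pi := ⟨le_of_lt ht0, ht1⟩
  have hπ := Real.pi_pos
  set θ₂ : ℝ := 2 * Real.pi - t with hθ₂def
  set A : ℝ → Matrix (Fin n) (Fin n) ℂ := fun x => Matrix.of fun j k : Fin n =>
    (1 / (2 * (Real.pi : ℂ))) *
      ∫ θ in x..(2 * Real.pi - x),
        fhWeight α β θ * Complex.exp (-Complex.I * ((j.1 : ℂ) - (k.1 : ℂ)) * θ) with hAdef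
  have hDfun : ∀ x, toeplitzD α β n x = (A x).det := fun x => rfl
  set B : Matrix (Fin n) (Fin n) ℂ := Matrix.of (fun j k : Fin n =>
    -(1 / (2 * (Real.pi : ℂ))) *
      ((fhWeight α β t * Complex.exp (-Complex.I * ((j.1:ℂ)-(k.1:ℂ)) * t))
        + (fhWeight α β θ₂ * Complex.exp (-Complex.I * ((j.1:ℂ)-(k.1:ℂ)) * θ₂)))) with hBdef
  have hent : ∀ p q : Fin n, HasDerivAt (fun x => A x p q) (B p q) t := by
    intro p q
    have hc : ContinuousOn (fun θ : ℝ =>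
        fhWeight α β θ * Complex.exp (-Complex.I * ((p.1:ℂ)-(q.1:ℂ)) * θ))
        (Set.Ioo 0 (2*Real.pi)) := fun x hx =>
      ((fhWeight_continuousAt α β hx.1 hx.2).mul
        (by fun_prop : ContinuousAt (fun θ : ℝ =>
          Complex.exp (-Complex.I * ((p.1:ℂ)-(q.1:ℂ)) * θ)) x)).continuousWithinAt
    exact entry_hasDerivAt _ hc htIoo
  have hDet := det_hasDerivAt A B t hent
  -- Notation
  set T : Matrix (Fin n) (Fin n) ℂ := A t with hTdef
  have hdeg' : ∀ m : Fin n, (φ (m:ℕ) t).natDegree < n := fun m => by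
    rw [hdeg (m:ℕ) (le_of_lt m.isLt) t htIco]; exact m.isLt
  -- entries of T as inner products
  have h_entry : ∀ a b : Fin n, T a b = fhInner α β t (X ^ (b:ℕ)) (X ^ (a:ℕ)) := by
    intro a b
    show (1 / (2 * (Real.pi : ℂ))) * _ = _
    unfold fhInner
    congr 1
    exact intervalIntegral.integral_congr fun θ _ => integrand_entry α β (a:ℕ) (b:ℕ) θ
  -- orthogonality with larger index first
  have horth2 : ∀ a b : Fin n, (b:ℕ) < (a:ℕ) →
      fhInner α β t (φ (a:ℕ) t) (φ (b:ℕ) t) = 0 := by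
    intro a b hba
    rw [fhInner_expand_right α hβ htIoo _ _ (hdeg' b)]
    refine Finset.sum_eq_zero fun j hj => ?_
    rcases lt_or_ge j (a:ℕ) with hja | hja
    · rw [horth (a:ℕ) (le_of_lt a.isLt) t htIco j hja, mul_zero]
    · have : (φ (b:ℕ) t).coeff j = 0 := by
        apply Polynomial.coeff_eq_zero_of_natDegree_lt
        rw [hdeg (b:ℕ) (le_of_lt b.isLt) t htIco]
        omega
      rw [this, map_zero, zero_mul]
  -- the coefficient matrices
  set C : Matrix (Fin n) (Fin n) ℂ := Matrix.of (fun m j : Fin n => (φ (m:ℕ) t).coeff (j:ℕ))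
    with hCdef
  set Cs : Matrix (Fin n) (Fin n) ℂ :=
    Matrix.of (fun m j : Fin n => (starRingEnd ℂ) ((φ (m:ℕ) t).coeff (j:ℕ))) with hCsdef
  set Dχ : Matrix (Fin n) (Fin n) ℂ :=
    Matrix.diagonal (fun m : Fin n => (((χ (m:ℕ) t) ^ 2 : ℝ) : ℂ)) with hDχdef
  -- factorization
  have hfact : Cs * T * Cᵀ
      = Matrix.diagonal (fun m : Fin n => ((((χ (m:ℕ) t))⁻¹ ^ 2 : ℝ) : ℂ)) := by
    have hentry : ∀ m m' : Fin n, (Cs * T * Cᵀ) m m'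
        = fhInner α β t (φ ((m':ℕ)) t) (φ ((m:ℕ)) t) := by
      intro m m'
      rw [fhInner_expand α β htIoo _ _ (hdeg' m') (hdeg' m), Finset.sum_product]
      rw [Matrix.mul_apply]
      rw [← Fin.sum_univ_eq_sum_range (fun a => ∑ b ∈ Finset.range n,
        (φ (m':ℕ) t).coeff a * (starRingEnd ℂ) ((φ (m:ℕ) t).coeff b) *
          fhInner α β t (X ^ a) (X ^ b)) n]
      refine Finset.sum_congr rfl fun l _ => ?_
      rw [Matrix.mul_apply, Finset.sum_mul]
      rw [← Fin.sum_univ_eq_sum_range (fun b =>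
        (φ (m':ℕ) t).coeff (l:ℕ) * (starRingEnd ℂ) ((φ (m:ℕ) t).coeff b) *
          fhInner α β t (X ^ (l:ℕ)) (X ^ b)) n]
      refine Finset.sum_congr rfl fun j _ => ?_
      rw [h_entry j l]
      simp only [hCsdef, hCdef, Matrix.of_apply, Matrix.transpose_apply]
      ring
    ext m m'
    rw [hentry m m']
    rcases eq_or_ne m m' with rfl | hne
    · rw [Matrix.diagonal_apply_eq]
      exact hχ (m:ℕ) (le_of_lt m.isLt) t htIco
    · rw [Matrix.diagonal_apply_ne _ hne]
      have hne' : (m:ℕ) ≠ (m':ℕ) := fun h => hne (Fin.ext h)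
      rcases lt_or_gt_of_ne hne' with h | h
      · exact horth2 m' m h
      · rw [fhInner_conj_symm α hβ t (φ (m:ℕ) t) (φ (m':ℕ) t)]
        rw [horth2 m m' h, map_zero]
  -- inverse matrix
  set M : Matrix (Fin n) (Fin n) ℂ := Cᵀ * Dχ * Cs with hMdef
  have hχne : ∀ m : Fin n, (χ (m:ℕ) t) ≠ 0 :=
    fun m => ne_of_gt (hχpos (m:ℕ) (le_of_lt m.isLt) t htIco)
  have hdiag : Matrix.diagonal (fun m : Fin n => ((((χ (m:ℕ) t))⁻¹ ^ 2 : ℝ) : ℂ)) * Dχ = 1 := by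
    rw [hDχdef, Matrix.diagonal_mul_diagonal,
      show (fun i : Fin n => ((((χ (i:ℕ) t))⁻¹ ^ 2 : ℝ) : ℂ) * (((χ (i:ℕ) t) ^ 2 : ℝ) : ℂ))
        = fun _ : Fin n => (1 : ℂ) from funext fun m => by
          rw [← Complex.ofReal_mul]
          norm_num [hχne m],
      Matrix.diagonal_one]
  have hTM : T * M = 1 := by
    have h1 : Cs * (T * Cᵀ * Dχ) = 1 := by
      calc Cs * (T * Cᵀ * Dχ) = Cs * T * Cᵀ * Dχ := by
            rw [Matrix.mul_assoc, Matrix.mul_assoc, Matrix.mul_assoc]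
        _ = 1 := by rw [hfact, hdiag]
    have h2 : (T * Cᵀ * Dχ) * Cs = 1 := mul_eq_one_comm.mp h1
    calc T * M = (T * Cᵀ * Dχ) * Cs := by
          rw [hMdef, Matrix.mul_assoc, Matrix.mul_assoc, Matrix.mul_assoc]
      _ = 1 := h2
  have hMT : M * T = 1 := mul_eq_one_comm.mp hTM
  have hcram : ∀ u : Fin n → ℂ, Matrix.cramer T u = T.det • (M *ᵥ u) := by
    intro u
    calc Matrix.cramer T u = (M * T) *ᵥ Matrix.cramer T u := by
          rw [hMT, Matrix.one_mulVec]
      _ = M *ᵥ (T *ᵥ Matrix.cramer T u) := by rw [← Matrix.mulVec_mulVec]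
      _ = M *ᵥ (T.det • u) := by rw [Matrix.mulVec_cramer]
      _ = T.det • (M *ᵥ u) := Matrix.mulVec_smul M T.det u
  -- kernel identity
  have hker : ∀ z : ℂ,
      ∑ i : Fin n, z ^ (i:ℕ) * (M *ᵥ (fun k : Fin n => ((starRingEnd ℂ) z) ^ (k:ℕ))) i
      = ∑ k ∈ Finset.range n, (((χ k t) ^ 2 : ℝ) : ℂ) *
          ((Complex.normSq ((φ k t).eval z) : ℝ) : ℂ) := by
    intro z
    have hMik : ∀ i k : Fin n, M i k
        = ∑ m : Fin n, (φ (m:ℕ) t).coeff (i:ℕ) * (((χ (m:ℕ) t) ^ 2 : ℝ) : ℂ) *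
            (starRingEnd ℂ) ((φ (m:ℕ) t).coeff (k:ℕ)) := by
      intro i k
      rw [hMdef, Matrix.mul_apply]
      refine Finset.sum_congr rfl fun m _ => ?_
      rw [Matrix.mul_diagonal]
      simp only [hCdef, hCsdef, hDχdef, Matrix.of_apply, Matrix.transpose_apply]
    calc ∑ i : Fin n, z ^ (i:ℕ) * (M *ᵥ (fun k : Fin n => ((starRingEnd ℂ) z) ^ (k:ℕ))) i
        = ∑ i : Fin n, ∑ k : Fin n, ∑ m : Fin n,
            (((χ (m:ℕ) t) ^ 2 : ℝ) : ℂ) *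
              ((φ (m:ℕ) t).coeff (i:ℕ) * z ^ (i:ℕ)) *
              ((starRingEnd ℂ) ((φ (m:ℕ) t).coeff (k:ℕ)) * ((starRingEnd ℂ) z) ^ (k:ℕ)) := by
          refine Finset.sum_congr rfl fun i _ => ?_
          rw [show (M *ᵥ (fun k : Fin n => ((starRingEnd ℂ) z) ^ (k:ℕ))) i
              = ∑ k : Fin n, M i k * ((starRingEnd ℂ) z) ^ (k:ℕ) from rfl,
            Finset.mul_sum]
          refine Finset.sum_congr rfl fun k _ => ?_
          rw [hMik i k, Finset.sum_mul, Finset.mul_sum]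
          refine Finset.sum_congr rfl fun m _ => ?_
          ring
      _ = ∑ m : Fin n, ∑ i : Fin n, ∑ k : Fin n,
            (((χ (m:ℕ) t) ^ 2 : ℝ) : ℂ) *
              ((φ (m:ℕ) t).coeff (i:ℕ) * z ^ (i:ℕ)) *
              ((starRingEnd ℂ) ((φ (m:ℕ) t).coeff (k:ℕ)) * ((starRingEnd ℂ) z) ^ (k:ℕ)) := by
          rw [show (∑ i : Fin n, ∑ k : Fin n, ∑ m : Fin n,
              (((χ (m:ℕ) t) ^ 2 : ℝ) : ℂ) *
                ((φ (m:ℕ) t).coeff (i:ℕ) * z ^ (i:ℕ)) *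
                ((starRingEnd ℂ) ((φ (m:ℕ) t).coeff (k:ℕ)) * ((starRingEnd ℂ) z) ^ (k:ℕ)))
              = ∑ i : Fin n, ∑ m : Fin n, ∑ k : Fin n,
              (((χ (m:ℕ) t) ^ 2 : ℝ) : ℂ) *
                ((φ (m:ℕ) t).coeff (i:ℕ) * z ^ (i:ℕ)) *
                ((starRingEnd ℂ) ((φ (m:ℕ) t).coeff (k:ℕ)) * ((starRingEnd ℂ) z) ^ (k:ℕ))
            from Finset.sum_congr rfl fun i _ => Finset.sum_comm]
          exact Finset.sum_comm
      _ = ∑ m : Fin n, (((χ (m:ℕ) t) ^ 2 : ℝ) : ℂ) *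
            ((φ (m:ℕ) t).eval z * (starRingEnd ℂ) ((φ (m:ℕ) t).eval z)) := by
          refine Finset.sum_congr rfl fun m _ => ?_
          have h1 : (φ (m:ℕ) t).eval z
              = ∑ i : Fin n, (φ (m:ℕ) t).coeff (i:ℕ) * z ^ (i:ℕ) := by
            rw [eval_eq_sum_range' (hdeg' m)]
            exact (Fin.sum_univ_eq_sum_range (fun i => (φ (m:ℕ) t).coeff i * z ^ i) n).symm
          have h2 : (starRingEnd ℂ) ((φ (m:ℕ) t).eval z)
              = ∑ k : Fin n, (starRingEnd ℂ) ((φ (m:ℕ) t).coeff (k:ℕ)) *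
                  ((starRingEnd ℂ) z) ^ (k:ℕ) := by
            rw [h1, map_sum]
            exact Finset.sum_congr rfl fun k _ => by rw [RingHom.map_mul, map_pow]
          rw [h2, h1, Finset.sum_mul_sum, Finset.mul_sum]
          refine Finset.sum_congr rfl fun i _ => ?_
          rw [Finset.mul_sum]
          refine Finset.sum_congr rfl fun k _ => ?_
          ring
      _ = ∑ k ∈ Finset.range n, (((χ k t) ^ 2 : ℝ) : ℂ) *
            ((Complex.normSq ((φ k t).eval z) : ℝ) : ℂ) := by
          rw [← Fin.sum_univ_eq_sum_range (fun k => (((χ k t) ^ 2 : ℝ) : ℂ) *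
            ((Complex.normSq ((φ k t).eval z) : ℝ) : ℂ)) n]
          refine Finset.sum_congr rfl fun m _ => ?_
          rw [Complex.mul_conj]
  -- split the exponential in the derivative entries
  have hsplit : ∀ (θ : ℝ) (k i : ℕ),
      Complex.exp (-Complex.I * ((k:ℂ) - (i:ℂ)) * θ)
        = ((starRingEnd ℂ) (Complex.exp (Complex.I * θ))) ^ k
            * (Complex.exp (Complex.I * θ)) ^ i := by
    intro θ k i
    rw [← Complex.exp_conj, _root_.map_mul, Complex.conj_I, Complex.conj_ofReal,
      ← Complex.exp_nat_mul, ← Complex.exp_nat_mul, ← Complex.exp_add]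
    congr 1
    push_cast
    ring
  set z₁ : ℂ := Complex.exp (Complex.I * t) with hz₁def
  set z₂ : ℂ := Complex.exp (Complex.I * θ₂) with hz₂def
  have hcol : ∀ i : Fin n, (fun k : Fin n => B k i)
      = (-(1 / (2 * (Real.pi : ℂ))) * fhWeight α β t * z₁ ^ (i:ℕ)) •
          (fun k : Fin n => ((starRingEnd ℂ) z₁) ^ (k:ℕ))
        + (-(1 / (2 * (Real.pi : ℂ))) * fhWeight α β θ₂ * z₂ ^ (i:ℕ)) •
          (fun k : Fin n => ((starRingEnd ℂ) z₂) ^ (k:ℕ)) := by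
    intro i
    funext k
    simp only [hBdef, Matrix.of_apply, Pi.add_apply, Pi.smul_apply, smul_eq_mul]
    rw [hsplit t (k:ℕ) (i:ℕ), hsplit θ₂ (k:ℕ) (i:ℕ)]
    ring
  have hterm : ∀ i : Fin n, (T.updateCol i (fun k => B k i)).det
      = (-(1 / (2 * (Real.pi : ℂ))) * fhWeight α β t * z₁ ^ (i:ℕ)) *
          (T.det * (M *ᵥ (fun k : Fin n => ((starRingEnd ℂ) z₁) ^ (k:ℕ))) i)
        + (-(1 / (2 * (Real.pi : ℂ))) * fhWeight α β θ₂ * z₂ ^ (i:ℕ)) *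
          (T.det * (M *ᵥ (fun k : Fin n => ((starRingEnd ℂ) z₂) ^ (k:ℕ))) i) := by
    intro i
    rw [← Matrix.cramer_apply, hcol i, map_add, _root_.map_smul, _root_.map_smul,
      hcram, hcram]
    simp only [Pi.add_apply, Pi.smul_apply, smul_eq_mul]
  have hpull : ∀ (c : ℂ) (z : ℂ) (u : Fin n → ℂ),
      ∑ i : Fin n, (c * z ^ (i:ℕ)) * (T.det * (M *ᵥ u) i)
        = c * T.det * ∑ i : Fin n, z ^ (i:ℕ) * (M *ᵥ u) i := by
    intro c z u
    rw [Finset.mul_sum]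
    exact Finset.sum_congr rfl fun i _ => by ring
  have hsum : ∑ i : Fin n, (T.updateCol i (fun k => B k i)).det
      = T.det * (-(1 / (2 * (Real.pi : ℂ))) *
          (fhWeight α β t *
              ∑ k ∈ Finset.range n, (((χ k t) ^ 2 : ℝ) : ℂ) *
                ((Complex.normSq ((φ k t).eval z₁) : ℝ) : ℂ)
            + fhWeight α β θ₂ *
              ∑ k ∈ Finset.range n, (((χ k t) ^ 2 : ℝ) : ℂ) *
                ((Complex.normSq ((φ k t).eval z₂) : ℝ) : ℂ))) := by
    rw [Finset.sum_congr rfl (fun i _ => hterm i), Finset.sum_add_distrib,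
      hpull, hpull, hker z₁, hker z₂]
    ring
  rw [hsum] at hDet
  have hcast : ((θ₂ : ℝ) : ℂ) = 2 * (Real.pi : ℂ) - (t : ℂ) := by
    rw [hθ₂def]; push_cast; ring
  rw [← hcast]
  exact hDet
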